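/- (Correctness of the barycentric weight algorithm.) Let z_1, ..., z_K be distinct complex numbers with positive integer multiplicities n_1, ..., n_K, let π_k(z) = Π_{j≠k} (z − z_j)^{n_j}, and let w_{k,r} be the barycentric weights. Fix k, set C_k = Π_{j≠k} (z_k − z_j)^{−n_j}, and let A_k be the multiset consisting of (z_j − z_k)^{-1} repeated n_j times for each j ≠ k. Then for each 0 ≤ r ≤ n_k − 1: w_{k,r} = C_k · h_r(A_k), where h_r(A_k) is the complete homogeneous symmetric polynomial of degree r evaluated at the elements of A_k. Equivalently, h_r(A_k) is obtained from the inverse power sums P_s = Σ_{j≠k} n_j (z_j − z_k)^{−s} via the triangular recurrence r·h_r(A_k) = Σ_{s=1}^r P_s·h_{r−s}(A_k) with h_0(A_k) = 1. -/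

import Mathlib

open Polynomial Finset

private lemma bary_coeff_succ (a : ℂ) (G : ℂ[X]) (t : ℕ) :
    (((1 : ℂ[X]) - C a * X) * G).coeff (t + 1)
      = G.coeff (t + 1) - a * G.coeff t := by
  rw [sub_mul, one_mul, Polynomial.coeff_sub, mul_assoc, Polynomial.coeff_C_mul,
    Polynomial.coeff_X_mul]

private lemma bary_coeff_zero (a : ℂ) (G : ℂ[X]) :
    (((1 : ℂ[X]) - C a * X) * G).coeff 0 = G.coeff 0 := by
  simp [Polynomial.mul_coeff_zero]

private lemma bary_newton (A : Multiset ℂ) : ∀ r : ℕ,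
    ((r : ℕ) : ℂ) * ((A.map fun a => (1 : ℂ[X]) - C a * X).prod).coeff r
      = - ∑ i ∈ range r, (A.map fun a => a ^ (i + 1)).sum
          * ((A.map fun a => (1 : ℂ[X]) - C a * X).prod).coeff (r - 1 - i) := by
  induction A using Multiset.induction with
  | empty => intro r; rcases r with _ | t <;> simp [Polynomial.coeff_one]
  | cons a A ih =>
    intro r
    rcases r with _ | t
    · simp
    set G : ℂ[X] := (A.map fun a => (1 : ℂ[X]) - C a * X).prod with hG
    set P : ℕ → ℂ := fun s => (A.map fun a => a ^ s).sum with hPdef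
    have hmap : ((a ::ₘ A).map fun a => (1 : ℂ[X]) - C a * X).prod
        = ((1 : ℂ[X]) - C a * X) * G := by
      rw [Multiset.map_cons, Multiset.prod_cons]
    have hsum : ∀ s : ℕ, ((a ::ₘ A).map fun x => x ^ s).sum = a ^ s + P s := by
      intro s; rw [Multiset.map_cons, Multiset.sum_cons]
    have hg' : ∀ i : ℕ, (((1:ℂ[X]) - C a * X) * G).coeff (i+1)
        = G.coeff (i+1) - a * G.coeff i := fun i => bary_coeff_succ a G i
    have hg0 := bary_coeff_zero a G
    have hSA : ∑ i ∈ range (t+1), a ^ (i+1) * (((1:ℂ[X]) - C a * X) * G).coeff (t - i)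
        = a * G.coeff t := by
      rw [Finset.sum_range_succ]
      have h1 : ∑ i ∈ range t, a ^ (i+1) * (((1:ℂ[X]) - C a * X) * G).coeff (t - i)
          = ∑ i ∈ range t, ((fun i => a ^ (i+1) * G.coeff (t - i)) i
              - (fun i => a ^ (i+1) * G.coeff (t - i)) (i+1)) := by
        refine Finset.sum_congr rfl fun i hi => ?_
        have hit : i < t := Finset.mem_range.mp hi
        have e : t - i = (t - (i+1)) + 1 := by omega
        rw [e, hg', ← e]
        ring
      rw [h1, Finset.sum_range_sub']
      simp only [Nat.sub_self, hg0, Nat.sub_zero]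
      ring
    have hSB : ∑ i ∈ range (t+1), P (i+1) * (((1:ℂ[X]) - C a * X) * G).coeff (t - i)
        = -(((t+1 : ℕ) : ℂ) * G.coeff (t+1)) + a * (((t : ℕ) : ℂ) * G.coeff t) := by
      have h1 : ∑ i ∈ range (t+1), P (i+1) * (((1:ℂ[X]) - C a * X) * G).coeff (t - i)
          = ∑ i ∈ range (t+1), P (i+1) * G.coeff (t - i)
            - a * ∑ i ∈ range t, P (i+1) * G.coeff (t - 1 - i) := by
        rw [Finset.sum_range_succ, Finset.sum_range_succ
          (f := fun i => P (i+1) * G.coeff (t - i))]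
        have h2 : ∑ i ∈ range t, P (i+1) * (((1:ℂ[X]) - C a * X) * G).coeff (t - i)
            = ∑ i ∈ range t, (P (i+1) * G.coeff (t - i)
                - a * (P (i+1) * G.coeff (t - 1 - i))) := by
          refine Finset.sum_congr rfl fun i hi => ?_
          have hit : i < t := Finset.mem_range.mp hi
          have e : t - i = (t - 1 - i) + 1 := by omega
          rw [e, hg', ← e]
          ring
        rw [h2, Finset.sum_sub_distrib, Finset.mul_sum, Nat.sub_self, hg0]
        ring
      have e1 := ih (t+1)
      have e2 := ih t
      simp only [Nat.add_sub_cancel] at e1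
      rw [h1]
      rw [show ∑ i ∈ range (t+1), P (i+1) * G.coeff (t - i)
          = -(((t+1 : ℕ) : ℂ) * G.coeff (t+1)) from by rw [e1]; ring]
      rw [show ∑ i ∈ range t, P (i+1) * G.coeff (t - 1 - i)
          = -(((t : ℕ) : ℂ) * G.coeff t) from by rw [e2]; ring]
      ring
    rw [hmap]
    simp only [hsum, Nat.add_sub_cancel]
    calc ((t+1 : ℕ) : ℂ) * (((1:ℂ[X]) - C a * X) * G).coeff (t+1)
        = ((t+1 : ℕ) : ℂ) * (G.coeff (t+1) - a * G.coeff t) := by rw [hg' t]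
      _ = -(a * G.coeff t
            + (-(((t+1 : ℕ) : ℂ) * G.coeff (t+1)) + a * (((t : ℕ) : ℂ) * G.coeff t))) := by
          push_cast; ring
      _ = -(∑ i ∈ range (t+1), a ^ (i+1) * (((1:ℂ[X]) - C a * X) * G).coeff (t - i)
            + ∑ i ∈ range (t+1), P (i+1) * (((1:ℂ[X]) - C a * X) * G).coeff (t - i)) := by
          rw [hSA, hSB]
      _ = - ∑ i ∈ range (t+1), (a ^ (i+1) + P (i+1))
            * (((1:ℂ[X]) - C a * X) * G).coeff (t - i) := by
          rw [← Finset.sum_add_distrib]; congr 1; refine Finset.sum_congr rfl fun i _ => ?_; ring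

private lemma bary_conv (g I P : ℕ → ℂ)
    (hg : ∀ r : ℕ, (r : ℂ) * g r = -∑ i ∈ range r, P (i+1) * g (r-1-i))
    (hI : ∀ r : ℕ, (r : ℂ) * I r = ∑ i ∈ range r, P (i+1) * I (r-1-i)) :
    ∀ r : ℕ, 1 ≤ r → ∑ s ∈ range (r+1), g s * I (r - s) = 0 := by
  intro r hr
  have hr0 : (r : ℂ) ≠ 0 := Nat.cast_ne_zero.mpr (by omega)
  apply mul_left_cancel₀ hr0
  rw [mul_zero, Finset.mul_sum]
  have hsplit : ∀ s ∈ range (r+1),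
      (r : ℂ) * (g s * I (r - s))
        = ((s : ℂ) * g s) * I (r - s) + g s * (((r - s : ℕ) : ℂ) * I (r - s)) := by
    intro s hs
    have hsr : s ≤ r := by have := Finset.mem_range.mp hs; omega
    have : ((r - s : ℕ) : ℂ) = (r : ℂ) - (s : ℂ) := by
      push_cast [Nat.cast_sub hsr]; ring
    rw [this]; ring
  rw [Finset.sum_congr rfl hsplit, Finset.sum_add_distrib]
  have hA : ∑ s ∈ range (r+1), ((s : ℂ) * g s) * I (r - s)
      = -∑ s ∈ range (r+1), (∑ i ∈ range s, P (i+1) * g (s-1-i)) * I (r - s) := by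
    rw [← Finset.sum_neg_distrib]
    refine Finset.sum_congr rfl fun s _ => ?_
    rw [hg s]; ring
  have hB : ∑ s ∈ range (r+1), g s * (((r - s : ℕ) : ℂ) * I (r - s))
      = ∑ s ∈ range (r+1), g s * (∑ i ∈ range (r - s), P (i+1) * I (r-s-1-i)) := by
    refine Finset.sum_congr rfl fun s _ => ?_
    rw [hI (r - s)]
  rw [hA, hB, neg_add_eq_zero]
  -- triangle swap
  have lhs1 : ∑ s ∈ range (r+1), (∑ i ∈ range s, P (i+1) * g (s-1-i)) * I (r - s)
      = ∑ s ∈ range (r+1), ∑ j ∈ range s, P (s - j) * g j * I (r - s) := by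
    refine Finset.sum_congr rfl fun s _ => ?_
    rw [Finset.sum_mul]
    have : ∑ i ∈ range s, P (i+1) * g (s-1-i) * I (r - s)
        = ∑ i ∈ range s, (fun j => P (s - j) * g j * I (r - s)) (s - 1 - i) := by
      refine Finset.sum_congr rfl fun i hi => ?_
      have his : i < s := Finset.mem_range.mp hi
      have e : s - (s - 1 - i) = i + 1 := by omega
      simp only [e]
    rw [this]
    exact Finset.sum_range_reflect (fun j => P (s - j) * g j * I (r - s)) s
  have lhs2 : ∑ s ∈ range (r+1), ∑ j ∈ range s, P (s - j) * g j * I (r - s)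
      = ∑ s ∈ range r, ∑ j ∈ range (s+1), P (s + 1 - j) * g j * I (r - (s+1)) := by
    rw [Finset.sum_range_succ' (fun s => ∑ j ∈ range s, P (s - j) * g j * I (r - s))]
    simp
  have lhs3 : ∑ s ∈ range r, ∑ j ∈ range (s+1), P (s + 1 - j) * g j * I (r - (s+1))
      = ∑ j ∈ range r, ∑ s ∈ Ico j r, P (s + 1 - j) * g j * I (r - (s+1)) := by
    simp only [Finset.range_eq_Ico]
    exact (Finset.sum_Ico_Ico_comm 0 r fun j s => P (s + 1 - j) * g j * I (r - (s+1))).symm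
  have lhs4 : ∑ j ∈ range r, ∑ s ∈ Ico j r, P (s + 1 - j) * g j * I (r - (s+1))
      = ∑ j ∈ range r, ∑ u ∈ range (r - j), P (u + 1) * g j * I (r - j - 1 - u) := by
    refine Finset.sum_congr rfl fun j hj => ?_
    rw [Finset.sum_Ico_eq_sum_range]
    refine Finset.sum_congr rfl fun u hu => ?_
    have hjr : j < r := Finset.mem_range.mp hj
    have hur : u < r - j := Finset.mem_range.mp hu
    have e1 : j + u + 1 - j = u + 1 := by omega
    have e2 : r - (j + u + 1) = r - j - 1 - u := by omega
    rw [e1, e2]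
  have rhs1 : ∑ s ∈ range (r+1), g s * (∑ i ∈ range (r - s), P (i+1) * I (r-s-1-i))
      = ∑ j ∈ range r, ∑ u ∈ range (r - j), P (u + 1) * g j * I (r - j - 1 - u) := by
    rw [Finset.sum_range_succ]
    simp only [Nat.sub_self, Finset.range_zero, Finset.sum_empty, mul_zero, add_zero]
    refine Finset.sum_congr rfl fun j _ => ?_
    rw [Finset.mul_sum]
    refine Finset.sum_congr rfl fun u _ => ?_
    ring
  rw [lhs1, lhs2, lhs3, lhs4, rhs1]

private lemma bary_A_map {ι : Type*} [DecidableEq ι] (S : Finset ι) (n : ι → ℕ)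
    (a : ι → ℂ) (f : ℂ → ℂ[X]) :
    (((∑ j ∈ S, Multiset.replicate (n j) (a j)).map f)).prod = ∏ j ∈ S, f (a j) ^ n j := by
  induction S using Finset.induction with
  | empty => simp
  | insert _ _ hj ih =>
    rw [Finset.sum_insert hj, Finset.prod_insert hj, Multiset.map_add, Multiset.prod_add,
      Multiset.map_replicate, Multiset.prod_replicate, ih]

private lemma bary_A_sum {ι : Type*} [DecidableEq ι] (S : Finset ι) (n : ι → ℕ)
    (a : ι → ℂ) (f : ℂ → ℂ) :
    (((∑ j ∈ S, Multiset.replicate (n j) (a j)).map f)).sum = ∑ j ∈ S, (n j : ℂ) * f (a j) := by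
  induction S using Finset.induction with
  | empty => simp
  | insert _ _ hj ih =>
    rw [Finset.sum_insert hj, Finset.sum_insert hj, Multiset.map_add, Multiset.sum_add,
      Multiset.map_replicate, Multiset.sum_replicate, ih, nsmul_eq_mul]

private lemma bary_coeff_extract (m : ℕ) (c : ℕ → ℂ) (r : ℕ) (hr : r < m) :
    (∑ s ∈ range m, C (c s) * X ^ s).coeff r = c r := by
  rw [Polynomial.finset_sum_coeff]
  rw [Finset.sum_eq_single r]
  · simp
  · intro b _ hbr; simp [Polynomial.coeff_X_pow, Ne.symm hbr]
  · intro h; exact absurd (Finset.mem_range.mpr hr) h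

private lemma bary_comp (m : ℕ) (c : ℕ → ℂ) (zk : ℂ) :
    (∑ s ∈ range m, C (c s) * (X - C zk) ^ s).comp (X + C zk)
      = ∑ s ∈ range m, C (c s) * X ^ s := by
  simp only [Polynomial.comp, Polynomial.eval₂_finset_sum]
  refine Finset.sum_congr rfl fun s _ => ?_
  show (C (c s) * (X - C zk) ^ s).comp (X + C zk) = _
  simp [Polynomial.mul_comp, Polynomial.pow_comp, Polynomial.sub_comp]

private lemma bary_deglt (m : ℕ) (c : ℕ → ℂ) (zk : ℂ) :
    (∑ r ∈ range m, C (c r) * (X - C zk) ^ r).degree < (m : WithBot ℕ) := by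
  apply lt_of_le_of_lt (Polynomial.degree_sum_le _ _)
  rw [Finset.sup_lt_iff (by exact WithBot.bot_lt_coe m)]
  intro r hr
  have hrm : r < m := Finset.mem_range.mp hr
  rw [← Polynomial.smul_eq_C_mul]
  apply lt_of_le_of_lt (Polynomial.degree_smul_le _ _)
  rw [Polynomial.degree_pow, Polynomial.degree_X_sub_C]
  simp only [nsmul_eq_mul, mul_one]
  exact_mod_cast hrm

/-- Correctness of the barycentric weight algorithm.  With distinct grid points
`z j` of multiplicities `n j`, fix `k` and let `w r` be the barycentric weights
at `z k` (the coefficients, in powers of `(z - z k)`, of the unique polynomial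
`W` of degree `≤ n k - 1` with `(X - z k)^(n k) ∣ π_k·W - 1`).  Let
`C_k = ∏_{j ≠ k} (z k - z j)^(-n j)`, let `P s = ∑_{j ≠ k} n j·(z j - z k)^(-s)`
be the inverse power sums of the multiset `A_k`, and let `I r = h_r(A_k)` be
determined by the triangular recurrence `I 0 = 1`,
`r·I r = ∑_{s=1}^{r} P s · I (r-s)` (which characterizes the complete
homogeneous symmetric function of `A_k`).  Then `w r = C_k · I r` for every
`0 ≤ r ≤ n k - 1`. -/
theorem barycentric_weights_algorithm_correct
    (K : ℕ) (z : Fin K → ℂ) (hz : Function.Injective z)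
    (n : Fin K → ℕ) (hn : ∀ k, 1 ≤ n k) (k : Fin K)
    (w : ℕ → ℂ)
    (hdiv : (X - C (z k)) ^ (n k) ∣
      (∏ j ∈ Finset.univ.erase k, (X - C (z j)) ^ (n j)) *
        (∑ r ∈ Finset.range (n k), C (w r) * (X - C (z k)) ^ r) - 1)
    (Ck : ℂ) (hCk : Ck = ∏ j ∈ Finset.univ.erase k, ((z k - z j) ^ (n j))⁻¹)
    (P : ℕ → ℂ)
    (hP : ∀ s : ℕ, P s = ∑ j ∈ Finset.univ.erase k, (n j : ℂ) * ((z j - z k) ^ s)⁻¹)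
    (I : ℕ → ℂ) (hI0 : I 0 = 1)
    (hIrec : ∀ r : ℕ, 1 ≤ r → (r : ℂ) * I r = ∑ s ∈ Finset.Icc 1 r, P s * I (r - s)) :
    ∀ r < n k, w r = Ck * I r := by
  classical
  set m := n k with hm
  set S := Finset.univ.erase k with hS
  have hzk : ∀ j ∈ S, z j - z k ≠ 0 := by
    intro j hj
    have : j ≠ k := (Finset.mem_erase.mp hj).1
    exact sub_ne_zero.mpr fun h => this (hz h)
  set a : Fin K → ℂ := fun j => (z j - z k)⁻¹ with ha
  set A : Multiset ℂ := ∑ j ∈ S, Multiset.replicate (n j) (a j) with hA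
  set G : ℂ[X] := (A.map fun x => (1 : ℂ[X]) - C x * X).prod with hG
  have hGprod : G = ∏ j ∈ S, ((1 : ℂ[X]) - C (a j) * X) ^ (n j) := bary_A_map S n a _
  set g : ℕ → ℂ := fun t => G.coeff t with hgdef
  have hg0 : g 0 = 1 := by
    simp [hgdef, hGprod, Polynomial.coeff_zero_eq_eval_zero, Polynomial.eval_prod]
  have hPa : ∀ s : ℕ, 1 ≤ s → P s = (A.map fun x => x ^ s).sum := by
    intro s _
    rw [hP s, hA, bary_A_sum S n a (fun x => x ^ s)]
    exact Finset.sum_congr rfl fun j _ => by rw [inv_pow]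
  have hgnewton : ∀ r : ℕ, (r : ℂ) * g r = -∑ i ∈ range r, P (i+1) * g (r-1-i) := by
    intro r
    have hb := bary_newton A r
    calc (r : ℂ) * g r
        = -∑ i ∈ range r, (A.map fun x => x ^ (i+1)).sum * g (r-1-i) := hb
      _ = -∑ i ∈ range r, P (i+1) * g (r-1-i) := by
          congr 1
          exact Finset.sum_congr rfl fun i _ => by rw [hPa (i+1) (by omega)]
  have hIr : ∀ r : ℕ, (r : ℂ) * I r = ∑ i ∈ range r, P (i+1) * I (r-1-i) := by
    intro r
    rcases r with _ | t
    · simp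
    rw [hIrec (t+1) (by omega), ← Finset.Ico_add_one_right_eq_Icc, Finset.sum_Ico_eq_sum_range]
    simp only [Nat.add_sub_cancel]
    refine Finset.sum_congr rfl fun i hi => ?_
    have := Finset.mem_range.mp hi
    congr 2 <;> omega
  have hconv := bary_conv g I P hgnewton hIr
  set H : ℂ[X] := ∑ r ∈ range m, C (I r) * X ^ r with hH
  have hHcoeff : ∀ t, t < m → H.coeff t = I t := fun t ht => bary_coeff_extract m I t ht
  have hXm : X ^ m ∣ G * H - 1 := by
    rw [Polynomial.X_pow_dvd_iff]
    intro d hd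
    rw [Polynomial.coeff_sub, Polynomial.coeff_mul,
      Finset.Nat.sum_antidiagonal_eq_sum_range_succ_mk]
    have hterm : ∀ s ∈ range (d+1),
        G.coeff s * H.coeff (d - s) = g s * I (d - s) := by
      intro s _
      rw [hHcoeff (d - s) (by omega)]
    rw [Finset.sum_congr rfl hterm]
    rcases d with _ | t
    · simp [hg0, hI0, Polynomial.coeff_one]
    · rw [hconv (t+1) (by omega)]
      simp [Polynomial.coeff_one]
  set π : ℂ[X] := ∏ j ∈ S, (X - C (z j)) ^ (n j) with hπ
  set E : ℂ := ∏ j ∈ S, (z k - z j) ^ (n j) with hE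
  have hEne : E ≠ 0 := by
    rw [hE]
    apply Finset.prod_ne_zero_iff.mpr
    intro j hj
    apply pow_ne_zero
    have h1 : z j - z k ≠ 0 := hzk j hj
    intro h
    exact h1 (by rw [show z j - z k = -(z k - z j) from by ring, h, neg_zero])
  have hCkE : Ck * E = 1 := by
    rw [hCk, Finset.prod_inv_distrib, ← hE, inv_mul_cancel₀ hEne]
  have hπcomp : π.comp (X + C (z k)) = C E * G := by
    have hfac : ∀ j ∈ S, ((X : ℂ[X]) - C (z j)).comp (X + C (z k))
        = C (z k - z j) * (1 - C (a j) * X) := by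
      intro j hj
      have hne := hzk j hj
      have h1 : (z k - z j) * a j = -1 := by
        rw [ha]
        field_simp
        ring
      rw [Polynomial.sub_comp, Polynomial.X_comp, Polynomial.C_comp]
      rw [mul_sub, mul_one, ← mul_assoc, ← Polynomial.C_mul, h1]
      rw [Polynomial.C_sub, map_neg, Polynomial.C_1]
      ring
    rw [hπ, hGprod]
    rw [Polynomial.prod_comp]
    rw [Finset.prod_congr rfl (fun j hj => by
      rw [Polynomial.pow_comp, hfac j hj, mul_pow])]
    rw [Finset.prod_mul_distrib, hE, map_prod]
    congr 1
    exact Finset.prod_congr rfl fun j _ => by rw [map_pow]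
  set W' : ℂ[X] := ∑ r ∈ range m, C (Ck * I r) * (X - C (z k)) ^ r with hW'
  set W : ℂ[X] := ∑ r ∈ range m, C (w r) * (X - C (z k)) ^ r with hW
  have hdiv' : (X - C (z k)) ^ m ∣ π * W' - 1 := by
    have hW'comp : W'.comp (X + C (z k)) = C Ck * H := by
      rw [hW', bary_comp, hH, Finset.mul_sum]
      refine Finset.sum_congr rfl fun s _ => ?_
      rw [← mul_assoc, ← Polynomial.C_mul]
    have hcomp1 : (π * W' - 1).comp (X + C (z k)) = G * H - 1 := by
      rw [Polynomial.sub_comp, Polynomial.mul_comp, Polynomial.one_comp, hπcomp, hW'comp]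
      have he : C E * G * (C Ck * H) = C (Ck * E) * (G * H) := by
        rw [Polynomial.C_mul]; ring
      rw [he, hCkE]
      simp
    obtain ⟨f, hf⟩ : X ^ m ∣ (π * W' - 1).comp (X + C (z k)) := by
      rw [hcomp1]; exact hXm
    have h3 := congrArg (fun p : ℂ[X] => p.comp (X - C (z k))) hf
    simp only [Polynomial.mul_comp, Polynomial.pow_comp, Polynomial.X_comp] at h3
    rw [Polynomial.comp_assoc] at h3
    have h4 : ((X : ℂ[X]) + C (z k)).comp (X - C (z k)) = X := by
      rw [Polynomial.add_comp, Polynomial.X_comp, Polynomial.C_comp]; ring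
    rw [h4, Polynomial.comp_X] at h3
    exact ⟨_, h3⟩
  have hWW : W = W' := by
    have hd : (X - C (z k)) ^ m ∣ π * (W - W') := by
      have hsub := dvd_sub hdiv hdiv'
      have e : (π * W - 1) - (π * W' - 1) = π * (W - W') := by ring
      rwa [e] at hsub
    have hnd : ¬ (X - C (z k)) ∣ π := by
      rw [Polynomial.dvd_iff_isRoot]
      intro hroot
      have hzero : π.eval (z k) = 0 := hroot
      rw [hπ, Polynomial.eval_prod] at hzero
      simp only [Polynomial.eval_pow, Polynomial.eval_sub, Polynomial.eval_X,
        Polynomial.eval_C] at hzero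
      exact hEne (by rw [hE]; exact hzero)
    have hWdvd : (X - C (z k)) ^ m ∣ W - W' :=
      (Polynomial.prime_X_sub_C (z k)).pow_dvd_of_dvd_mul_left m hnd hd
    have hdeg : (W - W').degree < ((X - C (z k)) ^ m).degree := by
      rw [Polynomial.degree_pow, Polynomial.degree_X_sub_C]
      simp only [nsmul_eq_mul, mul_one]
      apply lt_of_le_of_lt (Polynomial.degree_sub_le _ _)
      apply max_lt
      · rw [hW]; exact bary_deglt m w (z k)
      · rw [hW']; exact bary_deglt m (fun r => Ck * I r) (z k)
    have := Polynomial.eq_zero_of_dvd_of_degree_lt hWdvd hdeg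
    exact sub_eq_zero.mp this
  intro r hr
  have h1 : (∑ s ∈ range m, C (w s) * X ^ s).coeff r = w r :=
    bary_coeff_extract m w r hr
  have h2 : (∑ s ∈ range m, C (Ck * I s) * X ^ s).coeff r = Ck * I r :=
    bary_coeff_extract m (fun s => Ck * I s) r hr
  have := congrArg (fun p : ℂ[X] => (p.comp (X + C (z k))).coeff r) hWW
  simp only [hW, hW', bary_comp] at this
  rw [h1, h2] at this
  exact this
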